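/- Let k be a field, V a finite-dimensional k-vector space, B : V × V → k a nondegenerate bilinear form, m a natural number, and W_0 ⊆ W_1 ⊆ … ⊆ W_m = V a chain of subspaces (set W_{−1} = 0) such that B(W_l, W_{l'}) = 0 whenever l + l' < m. Then the following are equivalent: (i) for every 0 ≤ l ≤ m, the induced pairing gr B : (W_l / W_{l−1}) × (W_{m−l} / W_{m−l−1}) → k, given by gr B(f + W_{l−1}, g + W_{m−l−1}) = B(f, g), is nondegenerate; (ii) dim_k(W_l / W_{l−1}) = dim_k(W_{m−l} / W_{m−l−1}) for every 0 ≤ l ≤ m. -/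

import Mathlib

noncomputable section

/-- The "previous" term of a filtration, with the convention `W_{−1} = 0`. -/
def prevFil {k V : Type*} [Field k] [AddCommGroup V] [Module k V]
    (W : ℕ → Submodule k V) : ℕ → Submodule k V
  | 0 => ⊥
  | l + 1 => W l

open Module

/-- Dimension of the left orthogonal complement of a subspace with respect to a
nondegenerate bilinear form. -/
private lemma perp_finrank {k V : Type*} [Field k] [AddCommGroup V] [Module k V]
    [FiniteDimensional k V]
    (B : V →ₗ[k] V →ₗ[k] k) (hB : ∀ v, (∀ w, B v w = 0) → v = 0) (U : Submodule k V) :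
    finrank k (LinearMap.ker (U.dualRestrict ∘ₗ B)) + finrank k U = finrank k V := by
  have hBi : Function.Injective B := by
    rw [← LinearMap.ker_eq_bot, eq_bot_iff]
    intro v hv
    simp only [LinearMap.mem_ker] at hv
    exact hB v (fun w => by rw [hv]; rfl)
  have hBs : Function.Surjective B :=
    (LinearMap.injective_iff_surjective_of_finrank_eq_finrank
      (Subspace.dual_finrank_eq (V := V)).symm).mp hBi
  have hs : Function.Surjective (U.dualRestrict ∘ₗ B) :=
    Subspace.dualRestrict_surjective.comp hBs
  have h := LinearMap.finrank_range_add_finrank_ker (U.dualRestrict ∘ₗ B)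
  rw [LinearMap.range_eq_top.mpr hs, finrank_top, Subspace.dual_finrank_eq] at h
  omega

private lemma mem_perp_iff {k V : Type*} [Field k] [AddCommGroup V] [Module k V]
    (B : V →ₗ[k] V →ₗ[k] k) (U : Submodule k V) (v : V) :
    v ∈ LinearMap.ker (U.dualRestrict ∘ₗ B) ↔ ∀ u ∈ U, B v u = 0 := by
  simp only [LinearMap.mem_ker, LinearMap.comp_apply]
  constructor
  · intro h u hu
    have := congrArg (fun φ => φ ⟨u, hu⟩) h
    simpa using this
  · intro h
    ext u
    simpa using h u u.2

/-- For a nondegenerate bilinear form `B` on a finite-dimensional space `V` filtered by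
`W_0 ⊆ … ⊆ W_m = V` with `B(W_l, W_{l'}) = 0` for `l + l' < m`, the induced pairings
`gr B : (W_l/W_{l−1}) × (W_{m−l}/W_{m−l−1}) → k` are all nondegenerate if and only if
`dim (W_l/W_{l−1}) = dim (W_{m−l}/W_{m−l−1})` for all `0 ≤ l ≤ m`. -/
theorem statement8 (k V : Type*) [Field k] [AddCommGroup V] [Module k V]
    [FiniteDimensional k V]
    (B : V →ₗ[k] V →ₗ[k] k)
    (hBl : ∀ v : V, (∀ w : V, B v w = 0) → v = 0)
    (hBr : ∀ w : V, (∀ v : V, B v w = 0) → w = 0)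
    (m : ℕ) (W : ℕ → Submodule k V)
    (hchain : ∀ l, l < m → W l ≤ W (l + 1)) (htop : W m = ⊤)
    (horth : ∀ l l', l + l' < m → ∀ f ∈ W l, ∀ g ∈ W l', B f g = 0) :
    (∀ l, l ≤ m →
      ∃ grB : (W l ⧸ (prevFil W l).comap (W l).subtype) →ₗ[k]
          (W (m - l) ⧸ (prevFil W (m - l)).comap (W (m - l)).subtype) →ₗ[k] k,
        (∀ (f : W l) (g : W (m - l)),
          grB (Submodule.Quotient.mk f) (Submodule.Quotient.mk g) = B (f : V) (g : V)) ∧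
        (∀ p, (∀ q, grB p q = 0) → p = 0) ∧
        (∀ q, (∀ p, grB p q = 0) → q = 0)) ↔
    (∀ l, l ≤ m →
      Module.finrank k (W l ⧸ (prevFil W l).comap (W l).subtype) =
        Module.finrank k (W (m - l) ⧸ (prevFil W (m - l)).comap (W (m - l)).subtype)) := by
  -- notation
  have hPle : ∀ l, l ≤ m → prevFil W l ≤ W l := by
    intro l hl
    match l with
    | 0 => exact bot_le
    | j + 1 => exact hchain j (by omega)
  -- the orthogonality used for well-definedness: prev pairs to zero
  have hprev_left : ∀ l, l ≤ m → ∀ x ∈ prevFil W l, ∀ g ∈ W (m - l), B x g = 0 := by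
    intro l hl x hx g hg
    match l, hx with
    | 0, hx =>
      have : x = 0 := by simpa [prevFil] using hx
      simp [this]
    | j + 1, hx =>
      exact horth j (m - (j+1)) (by omega) x hx g hg
  have hprev_right : ∀ l, l ≤ m → ∀ x ∈ prevFil W (m - l), ∀ f ∈ W l, B f x = 0 := by
    intro l hl x hx f hf
    rcases h : m - l with _ | j
    · rw [h] at hx
      have : x = 0 := by simpa [prevFil] using hx
      simp [this]
    · rw [h] at hx
      exact horth l j (by omega) f hf x hx
  -- finrank of graded pieces
  have hrank : ∀ l, l ≤ m →
      finrank k (W l ⧸ (prevFil W l).comap (W l).subtype) + finrank k (prevFil W l)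
        = finrank k (W l) := by
    intro l hl
    have h1 := Submodule.finrank_quotient_add_finrank ((prevFil W l).comap (W l).subtype)
    have h2 : finrank k ((prevFil W l).comap (W l).subtype) = finrank k (prevFil W l) :=
      (Submodule.comapSubtypeEquivOfLe (hPle l hl)).finrank_eq
    omega
  -- construction of the graded pairing, with its defining property
  have hgrB : ∀ l, l ≤ m →
      ∃ grB : (W l ⧸ (prevFil W l).comap (W l).subtype) →ₗ[k]
          (W (m - l) ⧸ (prevFil W (m - l)).comap (W (m - l)).subtype) →ₗ[k] k,
        ∀ (f : W l) (g : W (m - l)),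
          grB (Submodule.Quotient.mk f) (Submodule.Quotient.mk g) = B (f : V) (g : V) := by
    intro l hl
    set b : (W l) →ₗ[k] (W (m - l)) →ₗ[k] k :=
      (B.comp (W l).subtype).compl₂ (W (m - l)).subtype with hb
    have hker2 : (prevFil W (m - l)).comap (W (m - l)).subtype ≤ LinearMap.ker b.flip := by
      intro g hg
      rw [LinearMap.mem_ker]
      ext f
      exact hprev_right l hl g hg f f.2
    set c := Submodule.liftQ _ b.flip hker2 with hc
    have hker1 : (prevFil W l).comap (W l).subtype ≤ LinearMap.ker c.flip := by
      intro f hf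
      rw [LinearMap.mem_ker]
      ext q
      exact hprev_left l hl f hf q q.2
    refine ⟨Submodule.liftQ _ c.flip hker1, ?_⟩
    intro f g
    rfl
  constructor
  · -- nondegeneracy implies equal dimensions
    intro H l hl
    obtain ⟨grB, _, hleft, hright⟩ := H l hl
    have hinj : Function.Injective grB := by
      rw [← LinearMap.ker_eq_bot, LinearMap.ker_eq_bot']
      intro p hp
      exact hleft p (fun q => by rw [hp]; rfl)
    have hinj' : Function.Injective grB.flip := by
      rw [← LinearMap.ker_eq_bot, LinearMap.ker_eq_bot']
      intro q hq
      exact hright q (fun p => by simpa using LinearMap.congr_fun hq p)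
    have h1 := LinearMap.finrank_le_finrank_of_injective hinj
    have h2 := LinearMap.finrank_le_finrank_of_injective hinj'
    rw [Subspace.dual_finrank_eq] at h1 h2
    omega
  · -- equal dimensions imply nondegeneracy
    intro hd l hl
    obtain ⟨grB, hpair⟩ := hgrB l hl
    -- key dimension identity
    have hsum : ∀ j, j ≤ m → finrank k (prevFil W j) + finrank k (W (m - j)) = finrank k V := by
      intro j
      induction j with
      | zero =>
        intro _
        have h0 : finrank k (prevFil W 0) = 0 := by
          show finrank k (⊥ : Submodule k V) = 0; exact finrank_bot k V
        rw [h0, Nat.sub_zero, htop]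
        simp [finrank_top]
      | succ i ih =>
        intro hi
        have hIH := ih (by omega)
        obtain ⟨j', hj'⟩ : ∃ j', m - i = j' + 1 := ⟨m - (i + 1), by omega⟩
        have hmj : m - (i + 1) = j' := by omega
        have e1 := hrank i (by omega)
        have e2 := hrank (m - i) (by omega)
        have e3 := hd i (by omega)
        have e4 : finrank k (prevFil W (m - i)) = finrank k (W (m - (i + 1))) := by
          rw [hj', hmj]
          rfl
        show finrank k (W i) + finrank k (W (m - (i + 1))) = finrank k V
        omega
    refine ⟨grB, hpair, ?_, ?_⟩
    · -- left nondegeneracy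
      intro p hp
      obtain ⟨f, rfl⟩ := Submodule.Quotient.mk_surjective _ p
      have hfperp : (f : V) ∈ LinearMap.ker ((W (m - l)).dualRestrict ∘ₗ B) := by
        rw [mem_perp_iff]
        intro u hu
        have := hp (Submodule.Quotient.mk ⟨u, hu⟩)
        rw [hpair f ⟨u, hu⟩] at this
        exact this
      have hle : prevFil W l ≤ LinearMap.ker ((W (m - l)).dualRestrict ∘ₗ B) := by
        intro x hx
        rw [mem_perp_iff]
        exact fun u hu => hprev_left l hl x hx u hu
      have heq : prevFil W l = LinearMap.ker ((W (m - l)).dualRestrict ∘ₗ B) := by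
        apply Submodule.eq_of_le_of_finrank_le hle
        have h1 := perp_finrank B hBl (W (m - l))
        have h2 := hsum l hl
        omega
      rw [Submodule.Quotient.mk_eq_zero]
      rw [Submodule.mem_comap]
      rw [heq]
      exact hfperp
    · -- right nondegeneracy
      intro q hq
      obtain ⟨g, rfl⟩ := Submodule.Quotient.mk_surjective _ q
      have hBr' : ∀ v, (∀ w, B.flip v w = 0) → v = 0 := by
        intro v hv
        exact hBr v (fun w => hv w)
      have hgperp : (g : V) ∈ LinearMap.ker ((W l).dualRestrict ∘ₗ B.flip) := by
        rw [mem_perp_iff]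
        intro u hu
        have := hq (Submodule.Quotient.mk ⟨u, hu⟩)
        rw [hpair ⟨u, hu⟩ g] at this
        exact this
      have hle : prevFil W (m - l) ≤ LinearMap.ker ((W l).dualRestrict ∘ₗ B.flip) := by
        intro x hx
        rw [mem_perp_iff]
        exact fun u hu => hprev_right l hl x hx u hu
      have heq : prevFil W (m - l) = LinearMap.ker ((W l).dualRestrict ∘ₗ B.flip) := by
        apply Submodule.eq_of_le_of_finrank_le hle
        have h1 := perp_finrank B.flip hBr' (W l)
        have h2 := hsum (m - l) (by omega)
        rw [Nat.sub_sub_self hl] at h2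
        omega
      rw [Submodule.Quotient.mk_eq_zero]
      rw [Submodule.mem_comap]
      rw [heq]
      exact hgperp
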